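/- If G is connected and balanced, κ > 0, and x is a global minimum of E, then xᵢ ≠ 0 for all i. -/

import Mathlib

open Finset

namespace Stmt7Aux

variable {n : ℕ} (γ : Fin n → Fin n → ℝ)

noncomputable def nc (k : ℕ) (c : ℕ → Fin n) : ℕ :=
  ∑ t ∈ Finset.range k, (if γ (c t) (c (t+1)) < 0 then 1 else 0)

def IsWalk (k : ℕ) (c : ℕ → Fin n) (u v : Fin n) : Prop :=
  c 0 = u ∧ c k = v ∧ ∀ i, i < k → γ (c i) (c (i+1)) ≠ 0

lemma concat {k₁ k₂ : ℕ} {c₁ c₂ : ℕ → Fin n} {u v w : Fin n}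
    (h₁ : IsWalk γ k₁ c₁ u v) (h₂ : IsWalk γ k₂ c₂ v w) :
    ∃ c, IsWalk γ (k₁ + k₂) c u w ∧ nc γ (k₁ + k₂) c = nc γ k₁ c₁ + nc γ k₂ c₂ := by
  obtain ⟨h10, h1k, h1e⟩ := h₁
  obtain ⟨h20, h2k, h2e⟩ := h₂
  set c : ℕ → Fin n := fun t => if t ≤ k₁ then c₁ t else c₂ (t - k₁) with hc
  have hgt : ∀ t, k₁ ≤ t → c t = c₂ (t - k₁) := by
    intro t ht
    rcases eq_or_lt_of_le ht with h | h
    · simp [hc, ← h, h1k, h20]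
    · simp [hc, Nat.not_le.mpr h]
  have hle : ∀ t, t ≤ k₁ → c t = c₁ t := fun t ht => by simp [hc, ht]
  refine ⟨c, ⟨?_, ?_, ?_⟩, ?_⟩
  · rw [hle 0 (Nat.zero_le _), h10]
  · rw [hgt _ (Nat.le_add_right _ _)]; simpa using h2k
  · intro i hi
    rcases Nat.lt_or_ge i k₁ with h | h
    · rw [hle i h.le, hle (i+1) h]
      exact h1e i h
    · rw [hgt i h, hgt (i+1) (le_trans h (Nat.le_succ i))]
      have : i + 1 - k₁ = (i - k₁) + 1 := by omega
      rw [this]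
      exact h2e _ (by omega)
  · unfold nc
    rw [Finset.range_eq_Ico, Finset.range_eq_Ico, Finset.range_eq_Ico, ← Finset.sum_Ico_consecutive _ (Nat.zero_le k₁) (Nat.le_add_right k₁ k₂)]
    congr 1
    · refine Finset.sum_congr rfl fun t ht => ?_
      rw [Finset.mem_Ico] at ht
      rw [hle t ht.2.le, hle (t+1) ht.2]
    · rw [Finset.sum_Ico_eq_sum_range, Finset.sum_Ico_eq_sum_range]
      simp only [Nat.add_sub_cancel_left, Nat.sub_zero, Nat.zero_add]
      refine Finset.sum_congr rfl fun t _ => ?_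
      rw [hgt (k₁ + t) (Nat.le_add_right _ _), hgt (k₁ + t + 1) (by omega)]
      have e1 : k₁ + t - k₁ = t := by omega
      have e2 : k₁ + t + 1 - k₁ = t + 1 := by omega
      rw [e1, e2]

lemma walk_exists (u v : Fin n) (h : Relation.ReflTransGen (fun a b => γ a b ≠ 0) u v) :
    ∃ k c, IsWalk γ k c u v := by
  induction h with
  | refl => exact ⟨0, fun _ => u, rfl, rfl, fun i hi => absurd hi (Nat.not_lt_zero i)⟩
  | @tail b c hab hbc ih =>
    obtain ⟨k, cc, hw⟩ := ih
    have hedge : IsWalk γ 1 (fun t => if t = 0 then b else c) b c :=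
      ⟨rfl, rfl, fun i hi => by
        have : i = 0 := by omega
        subst this; simpa using hbc⟩
    obtain ⟨c', hc', -⟩ := concat γ hw hedge
    exact ⟨k + 1, c', hc'⟩


lemma walk_even
    (hbal : ∀ (k : ℕ) (c : Fin (k + 1) → Fin n),
        c 0 = c (Fin.last k) →
        (∀ i j : Fin k, c i.castSucc = c j.castSucc → i = j) →
        (∀ i : Fin k, γ (c i.castSucc) (c i.succ) ≠ 0) →
        Even (Finset.univ.filter (fun i : Fin k => γ (c i.castSucc) (c i.succ) < 0)).card) :
    ∀ k (c : ℕ → Fin n), c k = c 0 → (∀ i, i < k → γ (c i) (c (i+1)) ≠ 0) →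
      Even (nc γ k c) := by
  intro k
  induction k using Nat.strong_induction_on with
  | _ k IH =>
    intro c hcl he
    by_cases hinj : ∀ i, i < k → ∀ j, j < k → c i = c j → i = j
    · have hb := hbal k (fun t => c t.val)
        (by show c (0 : Fin (k+1)).val = c (Fin.last k).val
            simp only [Fin.val_zero, Fin.val_last]
            exact hcl.symm)
        (fun i j hij => Fin.ext (hinj i.val i.isLt j.val j.isLt (by simpa using hij)))
        (fun i => by simpa using he i.val i.isLt)
      have htrans : nc γ k c = (Finset.univ.filter
          (fun i : Fin k => γ ((fun t : Fin (k+1) => c t.val) i.castSucc)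
            ((fun t : Fin (k+1) => c t.val) i.succ) < 0)).card := by
        rw [Finset.card_filter]
        unfold nc
        rw [← Fin.sum_univ_eq_sum_range (fun t => if γ (c t) (c (t+1)) < 0 then 1 else 0) k]
        exact Finset.sum_congr rfl fun i _ => by simp
      rw [htrans]
      exact hb
    · push_neg at hinj
      obtain ⟨a, ha, b, hb, hcab, hab⟩ := hinj
      have key : ∀ i j, i < j → j < k → c i = c j → Even (nc γ k c) := by
        clear hcab hab ha hb
        intro i j hij hjk hcij
        obtain ⟨d, hd0, rfl⟩ : ∃ d, 0 < d ∧ j = i + d := ⟨j - i, by omega, by omega⟩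
        set c2 : ℕ → Fin n := fun t => if t ≤ i then c t else c (t + d) with hc2
        have c2le : ∀ t, t ≤ i → c2 t = c t := fun t ht => by simp [hc2, ht]
        have c2gt : ∀ t, i < t → c2 t = c (t + d) := fun t ht => by
          simp [hc2, Nat.not_le.mpr ht]
        have e1 : Even (nc γ d (fun t => c (i + t))) := by
          apply IH d (by omega)
          · show c (i + d) = c (i + 0)
            rw [Nat.add_zero]
            exact hcij.symm
          · intro t ht
            have h1 : i + (t + 1) = i + t + 1 := by omega
            rw [h1]
            exact he (i + t) (by omega)
        have e2 : Even (nc γ (k - d) c2) := by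
          apply IH (k - d) (by omega)
          · rw [c2gt (k - d) (by omega), c2le 0 (Nat.zero_le i)]
            have h1 : k - d + d = k := by omega
            rw [h1]
            exact hcl
          · intro t ht
            rcases Nat.lt_or_ge t i with h | h
            · rw [c2le t h.le, c2le (t+1) h]
              exact he t (by omega)
            · rcases h.eq_or_lt with h' | h'
              · subst h'
                rw [c2le i le_rfl, c2gt (i+1) (by omega), hcij]
                have h1 : i + 1 + d = i + d + 1 := by omega
                rw [h1]
                exact he (i + d) (by omega)
              · rw [c2gt t h', c2gt (t+1) (by omega)]
                have h1 : t + 1 + d = t + d + 1 := by omega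
                rw [h1]
                exact he (t + d) (by omega)
        have hsplit : nc γ k c = nc γ d (fun t => c (i + t)) + nc γ (k - d) c2 := by
          unfold nc
          rw [Finset.range_eq_Ico, Finset.range_eq_Ico, Finset.range_eq_Ico]
          rw [← Finset.sum_Ico_consecutive (fun t => if γ (c t) (c (t+1)) < 0 then 1 else 0)
              (Nat.zero_le i) (show i ≤ k by omega),
             ← Finset.sum_Ico_consecutive (fun t => if γ (c t) (c (t+1)) < 0 then 1 else 0)
              (show i ≤ i + d by omega) (show i + d ≤ k by omega),
             ← Finset.sum_Ico_consecutive (fun t => if γ (c2 t) (c2 (t+1)) < 0 then 1 else 0)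
              (Nat.zero_le i) (show i ≤ k - d by omega)]
          have h1 : (∑ t ∈ Ico i (i + d), if γ (c t) (c (t+1)) < 0 then 1 else 0)
              = ∑ t ∈ Ico 0 d, if γ (c (i + t)) (c (i + (t+1))) < 0 then 1 else 0 := by
            rw [Finset.sum_Ico_eq_sum_range, Finset.sum_Ico_eq_sum_range]
            simp only [Nat.add_sub_cancel_left, Nat.sub_zero, Nat.zero_add]
            refine Finset.sum_congr rfl fun t _ => ?_
            have h' : i + (t + 1) = i + t + 1 := by omega
            rw [h']
          have h2 : (∑ t ∈ Ico 0 i, if γ (c t) (c (t+1)) < 0 then 1 else 0)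
              = ∑ t ∈ Ico 0 i, if γ (c2 t) (c2 (t+1)) < 0 then 1 else 0 := by
            refine Finset.sum_congr rfl fun t ht => ?_
            rw [Finset.mem_Ico] at ht
            rw [c2le t (by omega), c2le (t+1) (by omega)]
          have h3 : (∑ t ∈ Ico (i + d) k, if γ (c t) (c (t+1)) < 0 then 1 else 0)
              = ∑ t ∈ Ico i (k - d), if γ (c2 t) (c2 (t+1)) < 0 then 1 else 0 := by
            rw [Finset.sum_Ico_eq_sum_range, Finset.sum_Ico_eq_sum_range]
            have h' : k - d - i = k - (i + d) := by omega
            rw [h']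
            refine Finset.sum_congr rfl fun t ht => ?_
            rw [Finset.mem_range] at ht
            rcases Nat.eq_zero_or_pos t with rfl | htpos
            · simp only [Nat.add_zero, c2le i le_rfl, c2gt (i+1) (Nat.lt_succ_self i), hcij,
                show i + 1 + d = i + d + 1 by omega]
            · simp only [c2gt (i + t) (by omega), c2gt (i + t + 1) (by omega),
                show i + t + d = i + d + t by omega, show i + t + 1 + d = i + d + t + 1 by omega]
          rw [h1, h2, h3]
          ring
        rw [hsplit]
        exact e1.add e2
      rcases hab.lt_or_gt with h | h
      · exact key a b h hb hcab
      · exact key b a h ha hcab.symm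


theorem parity_unique
    (hconn : ∀ u v : Fin n, Relation.ReflTransGen (fun a b => γ a b ≠ 0) u v)
    (hbal : ∀ (k : ℕ) (c : Fin (k + 1) → Fin n),
        c 0 = c (Fin.last k) →
        (∀ i j : Fin k, c i.castSucc = c j.castSucc → i = j) →
        (∀ i : Fin k, γ (c i.castSucc) (c i.succ) ≠ 0) →
        Even (Finset.univ.filter (fun i : Fin k => γ (c i.castSucc) (c i.succ) < 0)).card)
    {r v : Fin n} {k₁ k₂ : ℕ} {c₁ c₂ : ℕ → Fin n}
    (h₁ : IsWalk γ k₁ c₁ r v) (h₂ : IsWalk γ k₂ c₂ r v) :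
    (Even (nc γ k₁ c₁) ↔ Even (nc γ k₂ c₂)) := by
  obtain ⟨k₃, c₃, h₃⟩ := walk_exists γ v r (hconn v r)
  obtain ⟨cA, hA, hAn⟩ := concat γ h₁ h₃
  obtain ⟨cB, hB, hBn⟩ := concat γ h₂ h₃
  have eA : Even (nc γ (k₁+k₃) cA) :=
    walk_even γ hbal _ _ (hA.2.1.trans hA.1.symm) hA.2.2
  have eB : Even (nc γ (k₂+k₃) cB) :=
    walk_even γ hbal _ _ (hB.2.1.trans hB.1.symm) hB.2.2
  rw [hAn, Nat.even_add] at eA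
  rw [hBn, Nat.even_add] at eB
  tauto

theorem sigma_spec
    (hconn : ∀ u v : Fin n, Relation.ReflTransGen (fun a b => γ a b ≠ 0) u v)
    (hbal : ∀ (k : ℕ) (c : Fin (k + 1) → Fin n),
        c 0 = c (Fin.last k) →
        (∀ i j : Fin k, c i.castSucc = c j.castSucc → i = j) →
        (∀ i : Fin k, γ (c i.castSucc) (c i.succ) ≠ 0) →
        Even (Finset.univ.filter (fun i : Fin k => γ (c i.castSucc) (c i.succ) < 0)).card)
    (r : Fin n) :
    ∃ σ : Fin n → ℝ, (∀ v, σ v = 1 ∨ σ v = -1) ∧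
      ∀ u v, γ u v ≠ 0 → σ u * σ v * γ u v = |γ u v| := by
  classical
  refine ⟨fun v => if ∃ k c, IsWalk γ k c r v ∧ Even (nc γ k c) then 1 else -1,
    fun v => by by_cases h : ∃ k c, IsWalk γ k c r v ∧ Even (nc γ k c) <;> simp [h], ?_⟩
  have hval : ∀ (v : Fin n) (k : ℕ) (c : ℕ → Fin n), IsWalk γ k c r v →
      (if ∃ k' c', IsWalk γ k' c' r v ∧ Even (nc γ k' c') then (1:ℝ) else -1)
        = (if Even (nc γ k c) then 1 else -1) := by
    intro v k c hw
    by_cases h : Even (nc γ k c)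
    · rw [if_pos h, if_pos ⟨k, c, hw, h⟩]
    · rw [if_neg h, if_neg]
      rintro ⟨k', c', hw', h'⟩
      exact h ((parity_unique γ hconn hbal hw' hw).mp h')
  intro u v huv
  obtain ⟨k, c, hw⟩ := walk_exists γ r u (hconn r u)
  have hedge : IsWalk γ 1 (fun t => if t = 0 then u else v) u v :=
    ⟨rfl, rfl, fun i hi => by
      have : i = 0 := by omega
      subst this; simpa using huv⟩
  obtain ⟨c', hw', hn'⟩ := concat γ hw hedge
  have hnce : nc γ 1 (fun t => if t = 0 then u else v) = if γ u v < 0 then 1 else 0 := by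
    unfold nc
    rw [Finset.sum_range_one]
    norm_num
  rw [hnce] at hn'
  dsimp only
  rw [hval u k c hw, hval v (k+1) c' hw', hn']
  by_cases hneg : γ u v < 0
  · rw [if_pos hneg, abs_of_neg hneg]
    by_cases hek : Even (nc γ k c)
    · rw [if_pos hek, if_neg (by simp [Nat.even_add_one, hek])]
      ring
    · rw [if_neg hek, if_pos (by simp [Nat.even_add_one, hek])]
      ring
  · have hpos : 0 < γ u v := lt_of_le_of_ne (not_lt.mp hneg) (Ne.symm huv)
    rw [if_neg hneg, Nat.add_zero, abs_of_pos hpos]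
    by_cases hek : Even (nc γ k c)
    · rw [if_pos hek]
      ring
    · rw [if_neg hek]
      ring

end Stmt7Aux

/-- if `G` is connected and balanced, `κ > 0`, and `x` is a global
minimum of `E`, then `xᵢ ≠ 0` for all `i`. -/
theorem stmt7 (n : ℕ) (γ : Fin n → Fin n → ℝ)
    (hsym : ∀ i j, γ i j = γ j i) (hdiag : ∀ i, γ i i = 0)
    (hconn : ∀ i j : Fin n, Relation.ReflTransGen (fun a b => γ a b ≠ 0) i j)
    (hbal : ∀ (k : ℕ) (c : Fin (k + 1) → Fin n),
        c 0 = c (Fin.last k) →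
        (∀ i j : Fin k, c i.castSucc = c j.castSucc → i = j) →
        (∀ i : Fin k, γ (c i.castSucc) (c i.succ) ≠ 0) →
        Even (Finset.univ.filter (fun i : Fin k => γ (c i.castSucc) (c i.succ) < 0)).card)
    (W : ℝ → ℝ) (m : ℝ) (hm : 0 < m)
    (hW : ContDiff ℝ 2 W) (heven : ∀ t, W (-t) = W t) (hWm : W m = 0)
    (hpos : ∀ t, t ∈ Set.Ioo (-m) 0 ∪ Set.Ioi m → 0 < deriv W t)
    (hneg : ∀ t, t ∈ Set.Iio (-m) ∪ Set.Ioo 0 m → deriv W t < 0)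
    (hgrowth : Filter.Tendsto (fun t => W t / t ^ 2) (Filter.cocompact ℝ) Filter.atTop)
    (κ : ℝ) (hκ : 0 < κ)
    (E : (Fin n → ℝ) → ℝ)
    (hE : ∀ x, E x = ∑ i, W (x i) + κ / 2 * ∑ i, ∑ j, γ i j * (x i - x j) ^ 2)
    (x : Fin n → ℝ) (hmin : ∀ y, E x ≤ E y) :
    ∀ i, x i ≠ 0 := by
  classical
  intro i₀ hx0
  obtain ⟨σ, hσpm, hσedge⟩ := Stmt7Aux.sigma_spec γ hconn hbal i₀
  have hσsq : ∀ v, σ v * σ v = 1 := fun v => by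
    rcases hσpm v with h | h <;> rw [h] <;> norm_num
  have hσne : ∀ v, σ v ≠ 0 := fun v => by
    rcases hσpm v with h | h <;> rw [h] <;> norm_num
  have hWs : ∀ (s t : ℝ), (s = 1 ∨ s = -1) → W (s * |t|) = W t := by
    intro s t hs
    rcases abs_choice t with h | h <;> rcases hs with rfl | rfl <;> rw [h]
    · rw [one_mul]
    · rw [neg_one_mul, heven]
    · rw [one_mul, heven]
    · rw [neg_one_mul, neg_neg]
  -- W is strictly decreasing on [0, m], so W 0 > 0
  have hanti : StrictAntiOn W (Set.Icc 0 m) := by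
    apply strictAntiOn_of_deriv_neg (convex_Icc 0 m) hW.continuous.continuousOn
    intro t ht
    rw [interior_Icc] at ht
    exact hneg t (Or.inr ht)
  have hW0 : 0 < W 0 := by
    have h := hanti (Set.left_mem_Icc.mpr hm.le) (Set.right_mem_Icc.mpr hm.le) hm
    rwa [hWm] at h
  -- the switched configuration z
  set z : Fin n → ℝ := fun v => σ v * |x v| with hz
  have hzv' : ∀ v, z v = σ v * |x v| := fun v => rfl
  have hz2 : ∀ v, z v ^ 2 = x v ^ 2 := by
    intro v
    rw [hzv' v]
    rcases hσpm v with h | h <;> rw [h] <;> simp [mul_pow, sq_abs]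
  have hWz : ∀ v, W (z v) = W (x v) := fun v => hWs (σ v) (x v) (hσpm v)
  have hquad : ∀ i j, γ i j * (z i - z j) ^ 2 ≤ γ i j * (x i - x j) ^ 2 := by
    intro i j
    by_cases hij : γ i j = 0
    · simp [hij]
    · have h1 : γ i j * (z i * z j) = |γ i j| * (|x i| * |x j|) := by
        have : γ i j * (σ i * |x i| * (σ j * |x j|))
            = (σ i * σ j * γ i j) * (|x i| * |x j|) := by ring
        rw [hzv' i, hzv' j, this, hσedge i j hij]
      have h2 : γ i j * (x i * x j) ≤ |γ i j| * (|x i| * |x j|) := by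
        calc γ i j * (x i * x j) ≤ |γ i j * (x i * x j)| := le_abs_self _
          _ = |γ i j| * (|x i| * |x j|) := by rw [abs_mul, abs_mul]
      have expand : γ i j * (x i - x j) ^ 2 - γ i j * (z i - z j) ^ 2
          = 2 * (γ i j * (z i * z j) - γ i j * (x i * x j)) := by
        have e1 := hz2 i
        have e2 := hz2 j
        linear_combination (-(γ i j)) * e1 + (-(γ i j)) * e2
      linarith [h1, h2, expand]
  have hEze : E z ≤ E x := by
    rw [hE z, hE x]
    have hWsum : ∑ i, W (z i) = ∑ i, W (x i) :=
      Finset.sum_congr rfl fun i _ => hWz i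
    have hQ : (∑ i, ∑ j, γ i j * (z i - z j) ^ 2) ≤ ∑ i, ∑ j, γ i j * (x i - x j) ^ 2 :=
      Finset.sum_le_sum fun i _ => Finset.sum_le_sum fun j _ => hquad i j
    have hκ2 : (0:ℝ) ≤ κ / 2 := by positivity
    nlinarith [mul_le_mul_of_nonneg_left hQ hκ2]
  -- reformulated energy
  have hE' : ∀ v : Fin n → ℝ, E v = ∑ i, W (v i)
      + κ * ((∑ i, (∑ j, γ i j) * v i ^ 2) - ∑ i, ∑ j, γ i j * (v i * v j)) := by
    intro v
    rw [hE v]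
    have key : (∑ i, ∑ j, γ i j * (v i - v j) ^ 2)
        = 2 * ((∑ i, (∑ j, γ i j) * v i ^ 2) - ∑ i, ∑ j, γ i j * (v i * v j)) := by
      have step1 : (∑ i, ∑ j, γ i j * (v i - v j) ^ 2)
          = ∑ i, ∑ j, (γ i j * v i ^ 2 + γ j i * v j ^ 2 - 2 * (γ i j * (v i * v j))) := by
        refine Finset.sum_congr rfl fun i _ => Finset.sum_congr rfl fun j _ => ?_
        rw [hsym j i]; ring
      have step2 : (∑ i : Fin n, ∑ j : Fin n, γ i j * v i ^ 2)
          = ∑ i, (∑ j, γ i j) * v i ^ 2 := by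
        refine Finset.sum_congr rfl fun i _ => ?_
        rw [Finset.sum_mul]
      have step3 : (∑ i : Fin n, ∑ j : Fin n, γ j i * v j ^ 2)
          = ∑ i, (∑ j, γ i j) * v i ^ 2 := by
        rw [Finset.sum_comm]
        refine Finset.sum_congr rfl fun i _ => ?_
        rw [Finset.sum_mul]
      rw [step1]
      simp only [Finset.sum_sub_distrib, Finset.sum_add_distrib, ← Finset.mul_sum]
      rw [step2, step3]
      ring
    rw [key]
    ring
  by_cases hall : ∀ v, x v = 0
  · have h1 : E x = n * W 0 := by
      rw [hE x]
      simp [hall]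
    have h2 : E (fun _ => m) = 0 := by
      rw [hE]
      simp [hWm]
    have h3 := hmin (fun _ => m)
    rw [h1, h2] at h3
    have hn : (1:ℝ) ≤ n := by
      have := i₀.pos
      exact_mod_cast this
    nlinarith
  · push_neg at hall
    obtain ⟨v, hv⟩ := hall
    have hzi0 : z i₀ = 0 := by rw [hzv' i₀, hx0]; simp
    have hzv : z v ≠ 0 := by
      rw [hzv' v]; exact mul_ne_zero (hσne v) (abs_ne_zero.mpr hv)
    have hfind : ∃ a b, γ a b ≠ 0 ∧ z a = 0 ∧ z b ≠ 0 := by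
      have key : ∀ w, Relation.ReflTransGen (fun a b => γ a b ≠ 0) i₀ w → z w ≠ 0 →
          ∃ a b, γ a b ≠ 0 ∧ z a = 0 ∧ z b ≠ 0 := by
        intro w hw
        induction hw with
        | refl => exact fun h => absurd hzi0 h
        | @tail p q hp hpq ih =>
          intro hzq
          by_cases hzp : z p = 0
          · exact ⟨p, q, hpq, hzp, hzq⟩
          · exact ih hzp
      exact key v (hconn i₀ v) hzv
    obtain ⟨a, b, hγab, hza, hzb⟩ := hfind
    have hxb : x b ≠ 0 := by
      intro h
      apply hzb
      rw [hzv' b, h]; simp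
    set R := ∑ j, γ a j with hR
    set S := ∑ j, γ a j * z j with hS
    set c0 := |γ a b| * |x b| with hc0
    have hc0pos : 0 < c0 := mul_pos (abs_pos.mpr hγab) (abs_pos.mpr hxb)
    have hσS : c0 ≤ σ a * S := by
      rw [hS, Finset.mul_sum]
      have hterm : ∀ j, σ a * (γ a j * z j) = |γ a j| * |x j| := by
        intro j
        by_cases h : γ a j = 0
        · simp [h]
        · have e : σ a * (γ a j * (σ j * |x j|)) = (σ a * σ j * γ a j) * |x j| := by ring
          rw [hzv' j, e, hσedge a j h]
      have hrw : (∑ j, σ a * (γ a j * z j)) = ∑ j, |γ a j| * |x j| :=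
        Finset.sum_congr rfl fun j _ => hterm j
      rw [hrw, hc0]
      exact Finset.single_le_sum (f := fun j => |γ a j| * |x j|)
        (fun j _ => mul_nonneg (abs_nonneg _) (abs_nonneg _)) (Finset.mem_univ b)
    set t := min m (c0 / (|R| + 1)) with ht
    have htpos : 0 < t := lt_min hm (div_pos hc0pos (by positivity))
    have htm : t ≤ m := min_le_left _ _
    have htR : |R| * t ≤ c0 := by
      have h1 : t ≤ c0 / (|R| + 1) := min_le_right _ _
      have h2 : t * (|R| + 1) ≤ c0 := (le_div_iff₀ (by positivity)).mp h1
      linarith [h2, htpos]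
    set s := σ a * t with hs
    set y := Function.update z a s with hy
    have hya : y a = s := by rw [hy, Function.update_self]
    have hyne : ∀ b', b' ≠ a → y b' = z b' := fun b' hb' => by
      rw [hy, Function.update_of_ne hb']
    clear_value z R S c0 t s y
    have hEy : E y - E z = (W s - W 0) + κ * (R * s ^ 2 - 2 * (s * S)) := by
      rw [hE' y, hE' z]
      have d1 : (∑ i, W (y i)) - ∑ i, W (z i) = W s - W 0 := by
        rw [← Finset.sum_sub_distrib, Finset.sum_eq_single a]
        · rw [hya, hza]
        · intro b' _ hb'
          rw [hyne b' hb']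
          ring
        · exact fun h => absurd (Finset.mem_univ a) h
      have d2 : (∑ i, (∑ j, γ i j) * y i ^ 2) - ∑ i, (∑ j, γ i j) * z i ^ 2
          = R * s ^ 2 := by
        rw [← Finset.sum_sub_distrib, Finset.sum_eq_single a]
        · rw [hya, hza, hR]
          ring
        · intro b' _ hb'
          rw [hyne b' hb']
          ring
        · exact fun h => absurd (Finset.mem_univ a) h
      have d3 : (∑ i, ∑ j, γ i j * (y i * y j)) - ∑ i, ∑ j, γ i j * (z i * z j)
          = 2 * (s * S) := by
        rw [← Finset.sum_sub_distrib]
        have hinner : ∀ i, ((∑ j, γ i j * (y i * y j)) - ∑ j, γ i j * (z i * z j))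
            = s * (γ a i * z i) + (if i = a then s * S else 0) := by
          intro i
          by_cases hia : i = a
          · subst hia
            rw [if_pos rfl]
            have hyi : y i = s := hya
            have hSy : (∑ j, γ i j * y j) = S := by
              rw [hS]
              refine Finset.sum_congr rfl fun j _ => ?_
              by_cases hj : j = i
              · subst hj
                rw [hdiag j]
                ring
              · rw [hyne j hj]
            have e1 : (∑ j, γ i j * (y i * y j)) = s * ∑ j, γ i j * y j := by
              rw [Finset.mul_sum]
              exact Finset.sum_congr rfl fun j _ => by rw [hyi]; ring
            have e2 : (∑ j, γ i j * (z i * z j)) = 0 := by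
              apply Finset.sum_eq_zero
              intro j _
              rw [hza]
              ring
            rw [e1, e2, hSy, hdiag, hza]
            ring
          · rw [if_neg hia, ← Finset.sum_sub_distrib]
            have hyi : y i = z i := hyne i hia
            rw [Finset.sum_eq_single a]
            · rw [hya, hyi, hza, hsym a i]
              ring
            · intro b' _ hb'
              rw [hyne b' hb', hyi]
              ring
            · exact fun h => absurd (Finset.mem_univ a) h
        rw [Finset.sum_congr rfl fun i _ => hinner i]
        rw [Finset.sum_add_distrib, ← Finset.mul_sum]
        have hSsym : (∑ i, γ a i * z i) = S := by rw [hS]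
        rw [hSsym, Finset.sum_ite_eq' Finset.univ a fun _ => s * S]
        simp
        ring
      linear_combination d1 + κ * d2 - κ * d3
    have hWst : W s = W t := by
      have he' : s = σ a * |t| := by rw [hs, abs_of_pos htpos]
      rw [he']
      exact hWs (σ a) t (hσpm a)
    have hssq : s ^ 2 = t ^ 2 := by
      rw [hs]
      linear_combination t ^ 2 * hσsq a
    have hsS : s * S = t * (σ a * S) := by rw [hs]; ring
    rw [hWst, hssq, hsS] at hEy
    have hWt : W t < W 0 := by
      have := hanti (Set.left_mem_Icc.mpr hm.le) ⟨htpos.le, htm⟩ htpos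
      exact this
    have hQle : R * t ^ 2 - 2 * (t * (σ a * S)) ≤ -(t * c0) := by
      have hb1 : R * t ^ 2 ≤ |R| * t * t := by
        calc R * t ^ 2 ≤ |R| * t ^ 2 :=
              mul_le_mul_of_nonneg_right (le_abs_self R) (sq_nonneg t)
          _ = |R| * t * t := by ring
      have hb2 : t * c0 ≤ t * (σ a * S) := mul_le_mul_of_nonneg_left hσS htpos.le
      have hb3 : |R| * t * t ≤ c0 * t := mul_le_mul_of_nonneg_right htR htpos.le
      linarith [hb1, hb2, hb3]
    have hfin : E y < E z := by
      have hk1 : κ * (R * t ^ 2 - 2 * (t * (σ a * S))) ≤ κ * (-(t * c0)) :=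
        mul_le_mul_of_nonneg_left hQle hκ.le
      have hk2 : κ * (-(t * c0)) < 0 := by
        have h := mul_pos hκ (mul_pos htpos hc0pos)
        linarith [h]
      linarith [hEy]
    linarith [hmin y, hEze, hfin]
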